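/- Let T be a tree of order n ≥ 3 and let 𝒢 be any Abelian group of order at least 4. Then there exists an edge labeling f: E(T) → 𝒢 \ {0} such that w(u) ≠ w(v) for every edge uv of T, where w(v) is the sum in 𝒢 of labels of edges incident to v. -/

import Mathlib

set_option linter.unusedSectionVars false
set_option maxHeartbeats 1000000
open SimpleGraph Walk

section TreeLemmas
variable {V : Type} [DecidableEq V] {G : SimpleGraph V}

lemma isPath_concat' {u v w : V} (p : G.Walk u v) (h : G.Adj v w) (hp : p.IsPath)
    (hw : w ∉ p.support) : (p.concat h).IsPath := by
  rw [← Walk.isPath_reverse_iff, Walk.reverse_concat]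
  exact hp.reverse.cons (by simpa [Walk.support_reverse] using hw)

lemma dist_le_mem_support {r y x : V} (p : G.Walk r y) (hx : x ∈ p.support) :
    G.dist r x ≤ p.length :=
  le_trans (SimpleGraph.dist_le (p.takeUntil x hx)) (Walk.length_takeUntil_le p hx)

lemma dist_adj_le (hconn : G.Connected) (r : V) {x y : V} (h : G.Adj x y) :
    G.dist r x ≤ G.dist r y + 1 := by
  obtain ⟨p, hp, hlen⟩ := (hconn.preconnected r y).exists_path_of_dist
  have := SimpleGraph.dist_le (p.concat h.symm)
  rwa [Walk.length_concat, hlen] at this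

lemma exists_closer (hconn : G.Connected) {r x : V} (hx : 0 < G.dist r x) :
    ∃ y, G.Adj x y ∧ G.dist r y + 1 = G.dist r x := by
  obtain ⟨p, hp, hlen⟩ := (hconn.preconnected r x).exists_path_of_dist
  rcases hq : p.reverse with _ | ⟨h, q'⟩
  · exfalso
    simp [SimpleGraph.dist_self] at hx
  · rename_i y
    refine ⟨y, h, ?_⟩
    have hlq : q'.length = G.dist r x - 1 := by
      have := congrArg Walk.length hq
      rw [Walk.length_reverse, hlen] at this
      simp at this
      omega
    have h1 : G.dist r y ≤ G.dist r x - 1 := by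
      have := SimpleGraph.dist_le q'.reverse
      rwa [Walk.length_reverse, hlq] at this
    have h2 : G.dist r x ≤ G.dist r y + 1 := dist_adj_le hconn r h
    omega

lemma tree_adj_dist_ne (ht : G.IsTree) (r : V) {x y : V} (h : G.Adj x y) :
    G.dist r x ≠ G.dist r y := by
  intro hEq
  have hconn := ht.isConnected
  obtain ⟨p, hp, hlen⟩ := (hconn.preconnected r y).exists_path_of_dist
  have hxs : x ∉ p.support := by
    intro hxs
    have hsplit : (p.takeUntil x hxs).length + (p.dropUntil x hxs).length = p.length := by
      rw [← Walk.length_append, Walk.take_spec]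
    have h1 : G.dist r x ≤ (p.takeUntil x hxs).length := SimpleGraph.dist_le _
    have h2 : G.dist x y ≤ (p.dropUntil x hxs).length := SimpleGraph.dist_le _
    have h3 : 0 < G.dist x y := hconn.pos_dist_of_ne h.ne
    rw [hlen] at hsplit
    omega
  have hq : (p.concat h.symm).IsPath := isPath_concat' p h.symm hp hxs
  obtain ⟨p0, hp0, huniq⟩ := ht.existsUnique_path r x
  obtain ⟨px, hpx, hlenx⟩ := (hconn.preconnected r x).exists_path_of_dist
  have e1 := huniq _ hq
  have e2 := huniq _ hpx
  have := congrArg Walk.length (e1.trans e2.symm)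
  rw [Walk.length_concat, hlen, hlenx] at this
  omega

lemma tree_closer_unique (ht : G.IsTree) (r : V) {x y1 y2 : V}
    (h1 : G.Adj x y1) (h2 : G.Adj x y2)
    (hd1 : G.dist r y1 + 1 = G.dist r x) (hd2 : G.dist r y2 + 1 = G.dist r x) :
    y1 = y2 := by
  have hconn := ht.isConnected
  obtain ⟨p1, hp1, hlen1⟩ := (hconn.preconnected r y1).exists_path_of_dist
  obtain ⟨p2, hp2, hlen2⟩ := (hconn.preconnected r y2).exists_path_of_dist
  have hx1 : x ∉ p1.support := fun hx => by
    have := dist_le_mem_support p1 hx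
    rw [hlen1] at this; omega
  have hx2 : x ∉ p2.support := fun hx => by
    have := dist_le_mem_support p2 hx
    rw [hlen2] at this; omega
  have hq1 : (p1.concat h1.symm).IsPath := isPath_concat' p1 h1.symm hp1 hx1
  have hq2 : (p2.concat h2.symm).IsPath := isPath_concat' p2 h2.symm hp2 hx2
  obtain ⟨p0, hp0, huniq⟩ := ht.existsUnique_path r x
  have e : p1.concat h1.symm = p2.concat h2.symm := (huniq _ hq1).trans (huniq _ hq2).symm
  have e' := congrArg Walk.reverse e
  rw [Walk.reverse_concat, Walk.reverse_concat] at e'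
  have := congrArg (fun w => w.getVert 1) e'
  simpa [Walk.getVert_cons_succ, Walk.getVert_zero] using this

/-- Every tree with at least 2 vertices has a leaf. -/
lemma tree_exists_leaf [Fintype V] [DecidableRel G.Adj] (ht : G.IsTree)
    (h2 : 2 ≤ Fintype.card V) : ∃ r : V, G.degree r = 1 := by
  have hconn := ht.isConnected
  obtain ⟨r0⟩ := hconn.nonempty
  obtain ⟨v, -, hv⟩ := Finset.exists_max_image Finset.univ (fun x => G.dist r0 x)
    ⟨r0, Finset.mem_univ r0⟩
  have hvpos : 0 < G.dist r0 v := by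
    obtain ⟨w, hw⟩ := Fintype.exists_ne_of_one_lt_card (by omega) r0
    have h1 : 0 < G.dist r0 w := hconn.pos_dist_of_ne (Ne.symm hw)
    have := hv w (Finset.mem_univ w)
    omega
  obtain ⟨y, hy, hyd⟩ := exists_closer hconn hvpos
  refine ⟨v, ?_⟩
  rw [SimpleGraph.degree, Finset.card_eq_one]
  refine ⟨y, Finset.eq_singleton_iff_unique_mem.mpr ⟨(SimpleGraph.mem_neighborFinset G v y).mpr hy, ?_⟩⟩
  intro y' hy'
  rw [SimpleGraph.mem_neighborFinset] at hy'
  have hne := tree_adj_dist_ne ht r0 hy'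
  have hle := dist_adj_le hconn r0 hy'
  have hmax := hv y' (Finset.mem_univ y')
  exact tree_closer_unique ht r0 hy' hy (by omega) hyd

end TreeLemmas

section GroupLemmas
variable {𝒢 : Type} [AddCommGroup 𝒢] [Fintype 𝒢] [DecidableEq 𝒢]

lemma exists_ne3 (hcard : 4 ≤ Fintype.card 𝒢) (a b c : 𝒢) :
    ∃ t : 𝒢, t ≠ a ∧ t ≠ b ∧ t ≠ c := by
  have h1 : ({a, b, c} : Finset 𝒢).card ≤ 3 :=
    le_trans (Finset.card_insert_le _ _) (by have := Finset.card_insert_le b {c}; simp only [Finset.card_singleton] at this; omega)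
  have h : (({a, b, c} : Finset 𝒢)ᶜ).Nonempty := by
    rw [← Finset.card_pos, Finset.card_compl]
    omega
  obtain ⟨t, ht⟩ := h
  simp [Finset.mem_compl] at ht
  exact ⟨t, ht.1, ht.2.1, ht.2.2⟩

/-- Key group-theoretic extension lemma. -/
lemma ext_lemma {α : Type} [DecidableEq α] (hcard : 4 ≤ Fintype.card 𝒢) :
    ∀ (k : ℕ) (s : Finset α), s.card = k → s.Nonempty → ∀ (W c : 𝒢), W ≠ 0 →
    ∃ x : α → 𝒢, (∀ i ∈ s, x i ≠ 0) ∧ (∀ i ∈ s, W + ∑ j ∈ s, x j ≠ x i) ∧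
      (W + ∑ j ∈ s, x j ≠ c) := by
  intro k
  induction k using Nat.strong_induction_on with
  | _ k ih =>
  intro s hsk hne W c hW
  match k, hsk with
  | 0, hsk => exact absurd hsk (by have := Finset.card_pos.mpr hne; omega)
  | 1, hsk =>
    obtain ⟨i, rfl⟩ := Finset.card_eq_one.mp hsk
    obtain ⟨t, ht0, htc, -⟩ := exists_ne3 hcard 0 (c - W) 0
    refine ⟨fun _ => t, by simp [ht0], ?_, ?_⟩
    · intro j hj
      simp only [Finset.sum_singleton]
      intro hEq
      rw [add_eq_right] at hEq
      exact hW hEq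
    · simp only [Finset.sum_singleton]
      intro hEq
      exact htc (eq_sub_of_add_eq' hEq)
  | 2, hsk =>
    obtain ⟨i, j, hij, rfl⟩ := Finset.card_eq_two.mp hsk
    by_cases hc : c = 0
    · subst hc
      obtain ⟨t, ht0, htW, htW'⟩ := exists_ne3 hcard 0 W (-W)
      set X : α → 𝒢 := fun m => if m = i then t else -t with hX
      have hXi : X i = t := by simp [hX]
      have hXj : X j = -t := by simp [hX, Ne.symm hij]
      have hsum : W + ∑ m ∈ ({i, j} : Finset α), X m = W := by
        rw [Finset.sum_pair hij, hXi, hXj]; abel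
      refine ⟨X, ?_, ?_, ?_⟩
      · intro m hm
        simp only [Finset.mem_insert, Finset.mem_singleton] at hm
        rcases hm with h | h
        · rw [h, hXi]; exact ht0
        · rw [h, hXj]; simpa using ht0
      · intro m hm
        rw [hsum]
        simp only [Finset.mem_insert, Finset.mem_singleton] at hm
        rcases hm with h | h
        · rw [h, hXi]; exact fun h2 => htW h2.symm
        · rw [h, hXj]; intro h2; exact htW' (by rw [h2, neg_neg])
      · rw [hsum]; exact hW
    · obtain ⟨t, ht0, htW, -⟩ := exists_ne3 hcard 0 (-W) 0
      have hx2 : (-W - t) ≠ 0 := by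
        intro h
        rw [sub_eq_zero] at h
        exact htW h.symm
      set X : α → 𝒢 := fun m => if m = i then t else -W - t with hX
      have hXi : X i = t := by simp [hX]
      have hXj : X j = -W - t := by simp [hX, Ne.symm hij]
      have hsum : W + ∑ m ∈ ({i, j} : Finset α), X m = 0 := by
        rw [Finset.sum_pair hij, hXi, hXj]; abel
      refine ⟨X, ?_, ?_, ?_⟩
      · intro m hm
        simp only [Finset.mem_insert, Finset.mem_singleton] at hm
        rcases hm with h | h
        · rw [h, hXi]; exact ht0
        · rw [h, hXj]; exact hx2
      · intro m hm
        rw [hsum]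
        simp only [Finset.mem_insert, Finset.mem_singleton] at hm
        rcases hm with h | h
        · rw [h, hXi]; exact fun h2 => ht0 h2.symm
        · rw [h, hXj]; exact fun h2 => hx2 h2.symm
      · rw [hsum]; exact fun h => hc h.symm
  | (m + 3), hsk =>
    obtain ⟨i, hi, j, hj, hij⟩ : ∃ i ∈ s, ∃ j ∈ s, i ≠ j :=
      Finset.one_lt_card.mp (by omega)
    set s' := (s.erase i).erase j with hs'
    have hjs' : j ∉ s' := Finset.notMem_erase _ _
    have his' : i ∉ s' := fun h => (Finset.notMem_erase i s) (Finset.mem_of_mem_erase h)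
    have hins : s = insert i (insert j s') := by
      ext n
      simp only [Finset.mem_insert, hs', Finset.mem_erase]
      constructor
      · intro hn
        by_cases h1 : n = i; · left; exact h1
        by_cases h2 : n = j; · right; left; exact h2
        right; right; exact ⟨h2, h1, hn⟩
      · rintro (rfl | rfl | ⟨-, -, hn⟩) <;> assumption
    have hcard' : s'.card = m + 1 := by
      have e1 : (s.erase i).card = s.card - 1 := Finset.card_erase_of_mem hi
      have hjei : j ∈ s.erase i := Finset.mem_erase.mpr ⟨Ne.symm hij, hj⟩
      have e2 : s'.card = (s.erase i).card - 1 := Finset.card_erase_of_mem hjei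
      omega
    obtain ⟨x, hx0, hxS, hxc⟩ := ih (m + 1) (by omega) s' hcard'
      (Finset.card_pos.mp (by omega)) W c hW
    set S := W + ∑ j ∈ s', x j with hS
    obtain ⟨t, ht0, htS, htS'⟩ := exists_ne3 hcard 0 S (-S)
    set x' : α → 𝒢 := fun n => if n = i then t else if n = j then -t else x n with hx'
    have hinotmem : i ∉ insert j s' := by
      simp only [Finset.mem_insert]
      rintro (h | h)
      exacts [hij h, his' h]
    have hsum : ∑ n ∈ s, x' n = ∑ n ∈ s', x n := by
      rw [hins, Finset.sum_insert hinotmem, Finset.sum_insert hjs']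
      have e1 : x' i = t := by simp [hx']
      have e2 : x' j = -t := by simp [hx', Ne.symm hij]
      have e3 : ∀ n ∈ s', x' n = x n := by
        intro n hn
        have hni : n ≠ i := fun h => his' (h ▸ hn)
        have hnj : n ≠ j := fun h => hjs' (h ▸ hn)
        simp [hx', hni, hnj]
      rw [e1, e2, Finset.sum_congr rfl e3]
      abel
    have e1 : x' i = t := by simp [hx']
    have e2 : x' j = -t := by simp [hx', Ne.symm hij]
    have e3 : ∀ n ∈ s', x' n = x n := by
      intro n hn
      have hni : n ≠ i := fun h => his' (h ▸ hn)
      have hnj : n ≠ j := fun h => hjs' (h ▸ hn)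
      simp [hx', hni, hnj]
    refine ⟨x', ?_, ?_, ?_⟩
    · intro n hn
      rw [hins] at hn
      simp only [Finset.mem_insert] at hn
      rcases hn with h | h | hn
      · rw [h, e1]; exact ht0
      · rw [h, e2]; simpa using ht0
      · rw [e3 n hn]; exact hx0 n hn
    · intro n hn
      rw [hsum, ← hS]
      rw [hins] at hn
      simp only [Finset.mem_insert] at hn
      rcases hn with h | h | hn
      · rw [h, e1]; exact fun h2 => htS h2.symm
      · rw [h, e2]
        intro hEq
        exact htS' (by rw [hEq, neg_neg])
      · rw [e3 n hn]; exact hS ▸ hxS n hn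
    · rw [hsum, ← hS]
      exact hS ▸ hxc

end GroupLemmas

theorem claimE {𝒢 : Type} [AddCommGroup 𝒢] [Fintype 𝒢] [DecidableEq 𝒢]
    (hcard : 4 ≤ Fintype.card 𝒢) :
    ∀ (n : ℕ) (V : Type) [Fintype V] [DecidableEq V] (T : SimpleGraph V)
      [DecidableRel T.Adj], Fintype.card V = n → T.IsTree → 3 ≤ Fintype.card V →
      ∀ (r : V), T.degree r = 1 → ∀ z : 𝒢,
      ∃ f : V → V → 𝒢, (∀ a b, f a b = f b a) ∧ (∀ a b, T.Adj a b → f a b ≠ 0) ∧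
        (∀ a b, T.Adj a b →
          (∑ x ∈ T.neighborFinset a, f a x) ≠ (∑ x ∈ T.neighborFinset b, f b x)) ∧
        (∑ x ∈ T.neighborFinset r, f r x) ≠ z := by
  intro n
  induction n using Nat.strong_induction_on with
  | _ n ih =>
  intro V _ _ T _ hn htree hcard3 r hr z
  have hconn := htree.isConnected
  -- the unique neighbor of r
  obtain ⟨u0, hu0⟩ := Finset.card_eq_one.mp hr
  have hadju0 : T.Adj r u0 := (SimpleGraph.mem_neighborFinset T r u0).mp (hu0 ▸ Finset.mem_singleton_self u0)
  -- maximal distance vertex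
  obtain ⟨v, -, hv⟩ := Finset.exists_max_image Finset.univ (fun x => T.dist r x)
    ⟨r, Finset.mem_univ r⟩
  set D := T.dist r v with hD
  by_cases hD2 : D ≤ 2
  · -- base case: star with center u0
    have hru0 : r ≠ u0 := hadju0.ne
    have hb1 : ∀ x : V, x ≠ u0 → T.Adj u0 x := by
      intro x hx
      by_cases hxr : x = r
      · subst hxr; exact hadju0.symm
      have hdx : T.dist r x ≤ 2 := le_trans (hv x (Finset.mem_univ x)) hD2
      have hdpos : 0 < T.dist r x := hconn.pos_dist_of_ne (Ne.symm hxr)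
      interval_cases hdd : (T.dist r x)
      · -- dist = 1
        have : T.Adj r x := SimpleGraph.dist_eq_one_iff_adj.mp hdd
        exact absurd (Finset.mem_singleton.mp (hu0 ▸ (SimpleGraph.mem_neighborFinset T r x).mpr this)) hx
      · -- dist = 2
        obtain ⟨y, hy, hyd⟩ := exists_closer hconn (by omega : 0 < T.dist r x)
        rw [hdd] at hyd
        have hy1 : T.dist r y = 1 := by omega
        have : T.Adj r y := SimpleGraph.dist_eq_one_iff_adj.mp hy1
        have : y = u0 := Finset.mem_singleton.mp (hu0 ▸ (SimpleGraph.mem_neighborFinset T r y).mpr this)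
        subst this
        exact hy.symm
    have hd02 : ∀ x : V, x ≠ u0 → T.dist r x = 0 ∨ T.dist r x = 2 := by
      intro x hx
      have hdx : T.dist r x ≤ 2 := le_trans (hv x (Finset.mem_univ x)) hD2
      by_cases h1 : T.dist r x = 1
      · exfalso
        have : T.Adj r x := SimpleGraph.dist_eq_one_iff_adj.mp h1
        exact hx (Finset.mem_singleton.mp (hu0 ▸ (SimpleGraph.mem_neighborFinset T r x).mpr this))
      · omega
    have hb3 : ∀ x : V, x ≠ u0 → T.neighborFinset x = {u0} := by
      intro x hx
      refine Finset.eq_singleton_iff_unique_mem.mpr ⟨(SimpleGraph.mem_neighborFinset T x u0).mpr (hb1 x hx).symm, ?_⟩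
      intro y hy
      rw [SimpleGraph.mem_neighborFinset] at hy
      by_contra hyu
      have hdne := tree_adj_dist_ne htree r hy
      have hle1 := dist_adj_le hconn r hy
      have hle2 := dist_adj_le hconn r hy.symm
      rcases hd02 x hx with h | h <;> rcases hd02 y hyu with h' | h' <;> omega
    have hb2 : T.neighborFinset u0 = Finset.univ.erase u0 := by
      ext y
      rw [SimpleGraph.mem_neighborFinset, Finset.mem_erase]
      constructor
      · intro h; exact ⟨h.ne', Finset.mem_univ y⟩
      · intro h; exact hb1 y h.1
    obtain ⟨a0, ha00, ha0z, -⟩ := exists_ne3 hcard 0 z 0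
    set s : Finset V := (Finset.univ.erase u0).erase r with hs
    have hrs : r ∉ s := Finset.notMem_erase _ _
    have hcs : (Finset.univ.erase u0).card = Fintype.card V - 1 := by
      rw [Finset.card_erase_of_mem (Finset.mem_univ u0), Finset.card_univ]
    have hrmem : r ∈ Finset.univ.erase u0 := Finset.mem_erase.mpr ⟨hru0, Finset.mem_univ r⟩
    have hcs2 : s.card = Fintype.card V - 2 := by
      rw [hs, Finset.card_erase_of_mem hrmem, hcs]
      omega
    have hsne : s.Nonempty := Finset.card_pos.mp (by omega)
    obtain ⟨xL, hxL0, hxLS, hxLc⟩ := ext_lemma hcard s.card s rfl hsne a0 a0 ha00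
    set g : V → 𝒢 := fun x => if x = r then a0 else xL x with hg
    have hg_ne : ∀ x : V, x ≠ u0 → g x ≠ 0 := by
      intro x hx
      by_cases hxr : x = r
      · simp [hg, hxr, ha00]
      · have hxs : x ∈ s := Finset.mem_erase.mpr ⟨hxr, Finset.mem_erase.mpr ⟨hx, Finset.mem_univ x⟩⟩
        simp only [hg, if_neg hxr]
        exact hxL0 x hxs
    have hsplit : Finset.univ.erase u0 = insert r s := (Finset.insert_erase hrmem).symm
    set f : V → V → 𝒢 := fun a b => if a = u0 then g b else if b = u0 then g a else 0 with hf
    have hWsum : ∑ x ∈ T.neighborFinset u0, f u0 x = a0 + ∑ j ∈ s, xL j := by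
      rw [hb2, hsplit, Finset.sum_insert hrs]
      have e0 : ∀ x, f u0 x = g x := by intro x; simp [hf]
      have e1 : f u0 r = a0 := by rw [e0]; simp [hg]
      rw [e1]
      congr 1
      apply Finset.sum_congr rfl
      intro x hxs
      rw [e0]
      have hxr : x ≠ r := Finset.ne_of_mem_erase hxs
      simp [hg, hxr]
    have hwother : ∀ x : V, x ≠ u0 → ∑ y ∈ T.neighborFinset x, f x y = g x := by
      intro x hx
      rw [hb3 x hx, Finset.sum_singleton]
      simp [hf, hx]
    refine ⟨f, ?_, ?_, ?_, ?_⟩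
    · intro a b
      by_cases ha : a = u0 <;> by_cases hb : b = u0 <;> simp [hf, ha, hb]
    · intro a b hab
      by_cases ha : a = u0
      · subst ha
        simp only [hf, if_pos rfl]
        exact hg_ne b hab.ne'
      · have hb : b = u0 := Finset.mem_singleton.mp ((hb3 a ha) ▸ (SimpleGraph.mem_neighborFinset T a b).mpr hab)
        subst hb
        simp only [hf, if_neg ha, if_pos rfl]
        exact hg_ne a ha
    · intro a b hab
      by_cases ha : a = u0
      · subst ha
        have hb := hab.ne'
        rw [hWsum, hwother b hb]
        by_cases hbr : b = r
        · subst hbr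
          simp only [hg, if_pos rfl]
          exact hxLc
        · have hbs : b ∈ s := Finset.mem_erase.mpr ⟨hbr, Finset.mem_erase.mpr ⟨hb, Finset.mem_univ b⟩⟩
          simp only [hg, if_neg hbr]
          exact hxLS b hbs
      · have hb : b = u0 := Finset.mem_singleton.mp ((hb3 a ha) ▸ (SimpleGraph.mem_neighborFinset T a b).mpr hab)
        subst hb
        rw [hWsum, hwother a ha]
        by_cases har : a = r
        · subst har
          simp only [hg, if_pos rfl]
          exact fun h => hxLc h.symm
        · have has : a ∈ s := Finset.mem_erase.mpr ⟨har, Finset.mem_erase.mpr ⟨ha, Finset.mem_univ a⟩⟩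
          simp only [hg, if_neg har]
          exact fun h => hxLS a has h.symm
    · rw [hwother r hru0]
      simp only [hg, if_pos rfl]
      exact ha0z
  · -- inductive step
    have hD3 : 3 ≤ D := by omega
    have hvpos : 0 < T.dist r v := by omega
    obtain ⟨u, huv, hud⟩ := exists_closer hconn hvpos
    have hupos : 0 < T.dist r u := by omega
    obtain ⟨p, hup, hpd⟩ := exists_closer hconn hupos
    classical
    set L : Finset V := Finset.univ.filter (fun x => T.Adj u x ∧ T.dist r x = D) with hLdef
    have hmemL : ∀ x, x ∈ L ↔ (T.Adj u x ∧ T.dist r x = D) := by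
      intro x; simp [hLdef]
    have hvL : v ∈ L := (hmemL v).mpr ⟨huv.symm, rfl⟩
    have hrL : r ∉ L := by
      intro h
      have := ((hmemL r).mp h).2
      rw [SimpleGraph.dist_self] at this
      omega
    have huL : u ∉ L := by
      intro h
      have := ((hmemL u).mp h).2
      omega
    have hpL : p ∉ L := by
      intro h
      have := ((hmemL p).mp h).2
      omega
    have hu_r : u ≠ r := by
      intro h
      rw [h, SimpleGraph.dist_self] at hud
      omega
    have hp_r : p ≠ r := by
      intro h
      rw [h, SimpleGraph.dist_self] at hpd
      omega
    have hp_u : p ≠ u := hup.ne'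
    have hLleaf : ∀ x ∈ L, T.neighborFinset x = {u} := by
      intro x hx
      obtain ⟨hadj, hdx⟩ := (hmemL x).mp hx
      refine Finset.eq_singleton_iff_unique_mem.mpr
        ⟨(SimpleGraph.mem_neighborFinset T x u).mpr hadj.symm, ?_⟩
      intro y hy
      rw [SimpleGraph.mem_neighborFinset] at hy
      have h1 := dist_adj_le hconn r hy
      have h2 := hv y (Finset.mem_univ y)
      have h3 := tree_adj_dist_ne htree r hy
      exact tree_closer_unique htree r hy hadj.symm (by omega) (by omega)
    have hLtouch : ∀ a x, x ∈ L → T.Adj a x → a = u := fun a x hx hax =>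
      Finset.mem_singleton.mp ((hLleaf x hx) ▸ (SimpleGraph.mem_neighborFinset T x a).mpr hax.symm)
    have hnbru : T.neighborFinset u = insert p L := by
      ext y
      rw [SimpleGraph.mem_neighborFinset, Finset.mem_insert, hmemL]
      constructor
      · intro hy
        have h1 := dist_adj_le hconn r hy
        have h2 := dist_adj_le hconn r hy.symm
        have h3 := tree_adj_dist_ne htree r hy
        have h4 := hv y (Finset.mem_univ y)
        by_cases hyD : T.dist r y = D
        · right; exact ⟨hy, hyD⟩
        · left
          exact tree_closer_unique htree r hy hup (by omega) (by omega)
      · rintro (rfl | ⟨h, -⟩)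
        exacts [hup, h]
    have hLnonempty : L.Nonempty := ⟨v, hvL⟩
    set T' : SimpleGraph {x : V // x ∉ L} := T.comap Subtype.val with hT'
    haveI hdecT' : DecidableRel T'.Adj := fun a b => ‹DecidableRel T.Adj› _ _
    have hadj' : ∀ a b : {x : V // x ∉ L}, T'.Adj a b ↔ T.Adj ↑a ↑b := fun a b => Iff.rfl
    have htree' : T'.IsTree := by
      constructor
      · -- connected
        have hreach : ∀ (k : ℕ) (x : {x : V // x ∉ L}), T.dist r ↑x = k →
            T'.Reachable x ⟨r, hrL⟩ := by
          intro k
          induction k using Nat.strong_induction_on with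
          | _ k ihk =>
          intro x hxk
          rcases Nat.eq_zero_or_pos k with h0 | hpos
          · subst h0
            have : r = ↑x := hconn.dist_eq_zero_iff.mp hxk
            have hx : x = ⟨r, hrL⟩ := Subtype.ext this.symm
            rw [hx]
          · obtain ⟨y, hy, hyd⟩ := exists_closer hconn (show 0 < T.dist r ↑x by omega)
            have hyL : y ∉ L := by
              intro hyL
              have hxu : (x : V) = u := hLtouch ↑x y hyL hy
              have h1 : T.dist r y = D := ((hmemL y).mp hyL).2
              rw [hxu] at hyd
              omega
            exact ((hadj' x ⟨y, hyL⟩).mpr hy).reachable.trans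
              (ihk (k - 1) (by omega) ⟨y, hyL⟩ (show T.dist r y = k - 1 by omega))
        haveI : Nonempty {x : V // x ∉ L} := ⟨⟨r, hrL⟩⟩
        exact ⟨fun a b => (hreach _ a rfl).trans (hreach _ b rfl).symm⟩
      · -- acyclic
        intro a c hc
        have hmap : (c.map (⟨Subtype.val, fun {x y} h => h⟩ : T' →g T)).IsCycle :=
          (SimpleGraph.Walk.map_isCycle_iff_of_injective Subtype.val_injective).mpr hc
        exact htree.2 _ hmap
    have hcardlt : Fintype.card {x : V // x ∉ L} < n := by
      rw [← hn]
      exact Fintype.card_subtype_lt (x := v) (not_not_intro hvL)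
    have hcard3' : 3 ≤ Fintype.card {x : V // x ∉ L} := by
      have h1 : ({⟨r, hrL⟩, ⟨u, huL⟩, ⟨p, hpL⟩} : Finset {x : V // x ∉ L}).card = 3 := by
        rw [Finset.card_insert_of_notMem, Finset.card_insert_of_notMem, Finset.card_singleton]
        · simp only [Finset.mem_singleton]
          exact fun h => hp_u (congrArg Subtype.val h).symm
        · simp only [Finset.mem_insert, Finset.mem_singleton]
          rintro (h | h)
          · exact hu_r (congrArg Subtype.val h).symm
          · exact hp_r (congrArg Subtype.val h).symm
      calc 3 = ({⟨r, hrL⟩, ⟨u, huL⟩, ⟨p, hpL⟩} : Finset {x : V // x ∉ L}).card := h1.symm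
        _ ≤ Fintype.card {x : V // x ∉ L} := Finset.card_le_univ _
    have hu0L : u0 ∉ L := by
      intro h
      have h1 : T.dist r u0 = D := ((hmemL u0).mp h).2
      have h2 : T.dist r u0 ≤ T.dist r r + 1 := dist_adj_le hconn r hadju0.symm
      rw [SimpleGraph.dist_self] at h2
      omega
    have hdeg' : T'.degree ⟨r, hrL⟩ = 1 := by
      rw [SimpleGraph.degree, Finset.card_eq_one]
      refine ⟨⟨u0, hu0L⟩, Finset.eq_singleton_iff_unique_mem.mpr
        ⟨(SimpleGraph.mem_neighborFinset T' _ _).mpr ((hadj' _ _).mpr hadju0), ?_⟩⟩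
      intro y hy
      rw [SimpleGraph.mem_neighborFinset] at hy
      have : (y : V) ∈ T.neighborFinset r := (SimpleGraph.mem_neighborFinset T r _).mpr ((hadj' _ _).mp hy)
      rw [hu0] at this
      exact Subtype.ext (Finset.mem_singleton.mp this)
    obtain ⟨f', hsym', hnz', hwt', hwr'⟩ := ih (Fintype.card {x : V // x ∉ L}) hcardlt
      {x : V // x ∉ L} T' rfl htree' hcard3' ⟨r, hrL⟩ hdeg' z
    have hnbru' : T'.neighborFinset ⟨u, huL⟩ = {⟨p, hpL⟩} := by
      refine Finset.eq_singleton_iff_unique_mem.mpr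
        ⟨(SimpleGraph.mem_neighborFinset T' _ _).mpr ((hadj' _ _).mpr hup), ?_⟩
      intro y hy
      rw [SimpleGraph.mem_neighborFinset] at hy
      have h1 : (y : V) ∈ T.neighborFinset u := (SimpleGraph.mem_neighborFinset T u _).mpr ((hadj' _ _).mp hy)
      rw [hnbru, Finset.mem_insert] at h1
      rcases h1 with h | h
      · exact Subtype.ext h
      · exact absurd h y.2
    set W : 𝒢 := f' ⟨u, huL⟩ ⟨p, hpL⟩ with hWdef
    have hW0 : W ≠ 0 := hnz' _ _ ((hadj' _ _).mpr hup)
    have hwu' : ∑ x ∈ T'.neighborFinset ⟨u, huL⟩, f' ⟨u, huL⟩ x = W := by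
      rw [hnbru', Finset.sum_singleton]
    obtain ⟨xL, hxL0, hxLS, hxLc⟩ := ext_lemma hcard L.card L rfl hLnonempty W
      (∑ x ∈ T'.neighborFinset ⟨p, hpL⟩, f' ⟨p, hpL⟩ x) hW0
    set S : 𝒢 := W + ∑ j ∈ L, xL j with hSdef
    set f : V → V → 𝒢 := fun a b =>
      if ha : a ∈ L then (if b = u then xL a else 0)
      else if hb : b ∈ L then (if a = u then xL b else 0)
      else f' ⟨a, ha⟩ ⟨b, hb⟩ with hfdef
    have hf_Lu : ∀ a ∈ L, f a u = xL a := by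
      intro a ha; simp [hfdef, ha]
    have hf_uL : ∀ b ∈ L, f u b = xL b := by
      intro b hb; simp [hfdef, huL, hb]
    have hf_out : ∀ (a b : V) (ha : a ∉ L) (hb : b ∉ L), f a b = f' ⟨a, ha⟩ ⟨b, hb⟩ := by
      intro a b ha hb; simp [hfdef, ha, hb]
    have hf_up : f u p = W := by rw [hf_out u p huL hpL]
    have hwL : ∀ x (hx : x ∈ L), ∑ y ∈ T.neighborFinset x, f x y = xL x := by
      intro x hx
      rw [hLleaf x hx, Finset.sum_singleton]
      exact hf_Lu x hx
    have hwu : ∑ y ∈ T.neighborFinset u, f u y = S := by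
      rw [hnbru, Finset.sum_insert hpL, hf_up, hSdef]
      congr 1
      exact Finset.sum_congr rfl (fun b hb => hf_uL b hb)
    have hwout : ∀ (a : V) (ha : a ∉ L) (hau : a ≠ u),
        ∑ y ∈ T.neighborFinset a, f a y =
        ∑ y ∈ T'.neighborFinset ⟨a, ha⟩, f' ⟨a, ha⟩ y := by
      intro a ha hau
      refine Finset.sum_bij'
        (fun y hy => (⟨y, fun hyL => hau (hLtouch a y hyL
          ((SimpleGraph.mem_neighborFinset T a y).mp hy))⟩ : {x : V // x ∉ L}))
        (fun y' _ => (y' : V)) ?_ ?_ ?_ ?_ ?_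
      · intro y hy
        rw [SimpleGraph.mem_neighborFinset] at hy ⊢
        exact (hadj' _ _).mpr hy
      · intro y' hy'
        rw [SimpleGraph.mem_neighborFinset] at hy' ⊢
        exact (hadj' _ _).mp hy'
      · intro y hy; rfl
      · intro y' hy'; rfl
      · intro y hy
        exact hf_out a y ha _
    have hwp : ∑ y ∈ T.neighborFinset p, f p y =
        ∑ y ∈ T'.neighborFinset ⟨p, hpL⟩, f' ⟨p, hpL⟩ y := hwout p hpL hp_u
    refine ⟨f, ?_, ?_, ?_, ?_⟩
    · -- symmetry
      intro a b
      by_cases ha : a ∈ L <;> by_cases hb : b ∈ L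
      · have hau : a ≠ u := fun h => huL (h ▸ ha)
        have hbu : b ≠ u := fun h => huL (h ▸ hb)
        simp [hfdef, ha, hb, hau, hbu]
      · simp [hfdef, ha, hb]
      · simp [hfdef, ha, hb]
      · rw [hf_out a b ha hb, hf_out b a hb ha]
        exact hsym' _ _
    · -- nonzero
      intro a b hab
      by_cases ha : a ∈ L
      · have hbu : b = u := hLtouch b a ha hab.symm
        rw [hbu, hf_Lu a ha]
        exact hxL0 a ha
      · by_cases hb : b ∈ L
        · have hau : a = u := hLtouch a b hb hab
          rw [hau, hf_uL b hb]
          exact hxL0 b hb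
        · rw [hf_out a b ha hb]
          exact hnz' _ _ ((hadj' _ _).mpr hab)
    · -- weights
      intro a b hab
      by_cases ha : a ∈ L
      · have hbu : b = u := hLtouch b a ha hab.symm
        subst hbu
        rw [hwL a ha, hwu]
        exact fun h => hxLS a ha h.symm
      · by_cases hb : b ∈ L
        · have hau : a = u := hLtouch a b hb hab
          subst hau
          rw [hwL b hb, hwu]
          exact hxLS b hb
        · by_cases hau : a = u
          · subst hau
            have hbp : b = p := by
              have : b ∈ T.neighborFinset a := (SimpleGraph.mem_neighborFinset T a b).mpr hab
              rw [hnbru, Finset.mem_insert] at this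
              rcases this with h | h
              · exact h
              · exact absurd h hb
            subst hbp
            rw [hwu, hwp]
            exact hxLc
          · by_cases hbu : b = u
            · subst hbu
              have hap : a = p := by
                have : a ∈ T.neighborFinset b := (SimpleGraph.mem_neighborFinset T b a).mpr hab.symm
                rw [hnbru, Finset.mem_insert] at this
                rcases this with h | h
                · exact h
                · exact absurd h ha
              subst hap
              rw [hwu, hwp]
              exact fun h => hxLc h.symm
            · rw [hwout a ha hau, hwout b hb hbu]
              exact hwt' _ _ ((hadj' _ _).mpr hab)
    · -- root weight
      rw [hwout r hrL (Ne.symm hu_r)]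
      exact hwr'


/-- For every tree `T` of order `n ≥ 3` and Abelian group `𝒢` of order at
least 4, there is a labeling of the edges of `T` with nonzero elements of `𝒢` such that
adjacent vertices receive distinct induced weights. -/
theorem stmt_8 {V : Type} [Fintype V] [DecidableEq V]
    (T : SimpleGraph V) [DecidableRel T.Adj] (htree : T.IsTree)
    (hord : 3 ≤ Fintype.card V)
    (𝒢 : Type) [AddCommGroup 𝒢] [Fintype 𝒢] (hcard : 4 ≤ Fintype.card 𝒢) :
    ∃ f : V → V → 𝒢,
      (∀ u v, f u v = f v u) ∧
      (∀ u v, T.Adj u v → f u v ≠ 0) ∧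
      (∀ u v, T.Adj u v →
        (∑ x ∈ T.neighborFinset u, f u x) ≠ (∑ x ∈ T.neighborFinset v, f v x)) := by
  letI : DecidableEq 𝒢 := Classical.decEq 𝒢
  obtain ⟨r, hr⟩ := tree_exists_leaf htree (by omega)
  obtain ⟨f, h1, h2, h3, -⟩ := claimE hcard (Fintype.card V) V T rfl htree hord r hr 0
  exact ⟨f, h1, h2, h3⟩
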